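/- Let R be a relation on subdistributions such that Δ R Θ implies |Δ| = |Θ| (mass-preserving). Then the weak linear closure lc(R) is linear, i.e. both left-linear and right-linear. -/

import Mathlib

open scoped BigOperators

/-- The mass of a subdistribution. -/
noncomputable def mass {S : Type*} (Δ : S → ℝ) : ℝ := ∑ᶠ s, Δ s

/-- A subdistribution over `S`. -/
def IsSubdist {S : Type*} (Δ : S → ℝ) : Prop :=
  (Function.support Δ).Finite ∧ (∀ s, 0 ≤ Δ s ∧ Δ s ≤ 1) ∧ mass Δ ≤ 1

/-- The weak linear closure `lc(R)` of a relation on subdistributions. -/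
inductive LC {S : Type*} (R : (S → ℝ) → (S → ℝ) → Prop) :
    (S → ℝ) → (S → ℝ) → Prop where
  | comb (n : ℕ) (p : Fin n → ℝ) (Δi Θi : Fin n → S → ℝ) :
      (∀ i, 0 ≤ p i) → (∀ i, R (Δi i) (Θi i)) →
      mass (fun s => ∑ i, p i * Δi i s) ≤ 1 →
      mass (fun s => ∑ i, p i * Θi i s) ≤ 1 →
      LC R (fun s => ∑ i, p i * Δi i s) (fun s => ∑ i, p i * Θi i s)

/-- Mass of a finite sum of finitely supported functions. -/
lemma mass_sum {S : Type*} {n : ℕ} (f : Fin n → S → ℝ)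
    (hf : ∀ i, (Function.support (f i)).Finite) :
    mass (fun s => ∑ i, f i s) = ∑ i, mass (f i) := by
  classical
  set T : Finset S := Finset.univ.biUnion (fun i => (hf i).toFinset) with hT
  have hsub : ∀ i, Function.support (f i) ⊆ (T : Set S) := by
    intro i x hx
    simp only [hT, Finset.coe_biUnion, Finset.mem_coe, Finset.mem_univ, Set.mem_iUnion,
      Set.Finite.coe_toFinset]
    exact ⟨i, by simp, hx⟩
  have hsupp : Function.support (fun s => ∑ i, f i s) ⊆ (T : Set S) := by
    intro x hx
    by_contra hxT
    apply hx
    apply Finset.sum_eq_zero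
    intro i _
    by_contra h0
    exact hxT (hsub i h0)
  rw [mass, finsum_eq_sum_of_support_subset _ hsupp, Finset.sum_comm]
  refine Finset.sum_congr rfl fun i _ => ?_
  rw [mass, finsum_eq_sum_of_support_subset _ (hsub i)]

lemma mass_smul {S : Type*} (c : ℝ) (Δ : S → ℝ) (h : (Function.support Δ).Finite) :
    mass (fun s => c * Δ s) = c * mass Δ := by
  rw [mass, mass, ← mul_finsum _ _]

lemma mass_combo {S : Type*} {n : ℕ} (p : Fin n → ℝ) (Δi : Fin n → S → ℝ)
    (h : ∀ i, (Function.support (Δi i)).Finite) :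
    mass (fun s => ∑ i, p i * Δi i s) = ∑ i, p i * mass (Δi i) := by
  rw [mass_sum (fun i s => p i * Δi i s)
    (fun i => (h i).subset (Function.support_mul_subset_right _ _))]
  exact Finset.sum_congr rfl fun i _ => mass_smul _ _ (h i)

lemma lc_elim {S : Type*} {R : (S → ℝ) → (S → ℝ) → Prop} {Δ Θ : S → ℝ}
    (h : LC R Δ Θ) :
    ∃ (m : ℕ) (q : Fin m → ℝ) (A B : Fin m → S → ℝ),
      (∀ j, 0 ≤ q j) ∧ (∀ j, R (A j) (B j)) ∧
      Δ = (fun s => ∑ j, q j * A j s) ∧ Θ = (fun s => ∑ j, q j * B j s) := by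
  cases h with
  | comb m q A B hq hR h1 h2 => exact ⟨m, q, A, B, hq, hR, rfl, rfl⟩

/-- if `R` relates subdistributions and is mass-preserving,
then the weak linear closure `lc(R)` is linear (left- and right-linear). -/
theorem lc_linear {S : Type*} (R : (S → ℝ) → (S → ℝ) → Prop)
    (hsub : ∀ Δ Θ, R Δ Θ → IsSubdist Δ ∧ IsSubdist Θ)
    (hmass : ∀ Δ Θ, R Δ Θ → mass Δ = mass Θ) :
    (∀ (n : ℕ) (p : Fin n → ℝ) (Δi Θi : Fin n → S → ℝ),
      (∀ i, 0 ≤ p i) → (∀ i, LC R (Δi i) (Θi i)) →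
      mass (fun s => ∑ i, p i * Δi i s) ≤ 1 →
      mass (fun s => ∑ i, p i * Θi i s) ≤ 1 ∧
        LC R (fun s => ∑ i, p i * Δi i s) (fun s => ∑ i, p i * Θi i s)) ∧
    (∀ (n : ℕ) (p : Fin n → ℝ) (Δi Θi : Fin n → S → ℝ),
      (∀ i, 0 ≤ p i) → (∀ i, LC R (Δi i) (Θi i)) →
      mass (fun s => ∑ i, p i * Θi i s) ≤ 1 →
      mass (fun s => ∑ i, p i * Δi i s) ≤ 1 ∧
        LC R (fun s => ∑ i, p i * Δi i s) (fun s => ∑ i, p i * Θi i s)) := by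
  classical
  -- main lemma: masses of the two combinations agree, and both produce LC
  have key : ∀ (n : ℕ) (p : Fin n → ℝ) (Δi Θi : Fin n → S → ℝ),
      (∀ i, 0 ≤ p i) → (∀ i, LC R (Δi i) (Θi i)) →
      mass (fun s => ∑ i, p i * Δi i s) = mass (fun s => ∑ i, p i * Θi i s) ∧
      (mass (fun s => ∑ i, p i * Δi i s) ≤ 1 →
        mass (fun s => ∑ i, p i * Θi i s) ≤ 1 →
        LC R (fun s => ∑ i, p i * Δi i s) (fun s => ∑ i, p i * Θi i s)) := by
    intro n p Δi Θi hp hR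
    choose m q A B hq hRA hΔ hΘ using fun i => lc_elim (hR i)
    have hAsup : ∀ i j, (Function.support (A i j)).Finite :=
      fun i j => (hsub _ _ (hRA i j)).1.1
    have hBsup : ∀ i j, (Function.support (B i j)).Finite :=
      fun i j => (hsub _ _ (hRA i j)).2.1
    have hΔsup : ∀ i, (Function.support (Δi i)).Finite := by
      intro i
      rw [hΔ i]
      refine Set.Finite.subset (Set.finite_iUnion (fun j => hAsup i j)) ?_
      intro x hx
      simp only [Set.mem_iUnion]
      by_contra hc
      push_neg at hc
      apply hx
      exact Finset.sum_eq_zero fun j _ => by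
        rw [Function.notMem_support.mp (hc j), mul_zero]
    have hΘsup : ∀ i, (Function.support (Θi i)).Finite := by
      intro i
      rw [hΘ i]
      refine Set.Finite.subset (Set.finite_iUnion (fun j => hBsup i j)) ?_
      intro x hx
      simp only [Set.mem_iUnion]
      by_contra hc
      push_neg at hc
      apply hx
      exact Finset.sum_eq_zero fun j _ => by
        rw [Function.notMem_support.mp (hc j), mul_zero]
    have hmi : ∀ i, mass (Δi i) = mass (Θi i) := by
      intro i
      rw [hΔ i, hΘ i, mass_combo _ _ (hAsup i), mass_combo _ _ (hBsup i)]
      exact Finset.sum_congr rfl fun j _ => by rw [hmass _ _ (hRA i j)]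
    have hmeq : mass (fun s => ∑ i, p i * Δi i s) = mass (fun s => ∑ i, p i * Θi i s) := by
      rw [mass_combo p Δi hΔsup, mass_combo p Θi hΘsup]
      exact Finset.sum_congr rfl fun i _ => by rw [hmi i]
    refine ⟨hmeq, fun h1 h2 => ?_⟩
    -- flatten the double combination
    obtain ⟨N, ⟨e⟩⟩ := Finite.exists_equiv_fin ((i : Fin n) × Fin (m i))
    set e' := e.symm
    have hΔeq : (fun s => ∑ i, p i * Δi i s)
        = (fun s => ∑ k : Fin N, (p (e' k).1 * q (e' k).1 (e' k).2) * A (e' k).1 (e' k).2 s) := by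
      funext s
      refine Eq.trans ?_
        (e'.sum_comp (fun x : (i : Fin n) × Fin (m i) => (p x.1 * q x.1 x.2) * A x.1 x.2 s)).symm
      rw [← Finset.univ_sigma_univ, Finset.sum_sigma]
      exact Finset.sum_congr rfl fun i _ => by
        rw [hΔ i, Finset.mul_sum]
        exact Finset.sum_congr rfl fun j _ => by ring
    have hΘeq : (fun s => ∑ i, p i * Θi i s)
        = (fun s => ∑ k : Fin N, (p (e' k).1 * q (e' k).1 (e' k).2) * B (e' k).1 (e' k).2 s) := by
      funext s
      refine Eq.trans ?_
        (e'.sum_comp (fun x : (i : Fin n) × Fin (m i) => (p x.1 * q x.1 x.2) * B x.1 x.2 s)).symm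
      rw [← Finset.univ_sigma_univ, Finset.sum_sigma]
      exact Finset.sum_congr rfl fun i _ => by
        rw [hΘ i, Finset.mul_sum]
        exact Finset.sum_congr rfl fun j _ => by ring
    rw [hΔeq, hΘeq]
    rw [hΔeq] at h1
    rw [hΘeq] at h2
    exact LC.comb N _ _ _ (fun k => mul_nonneg (hp _) (hq _ _)) (fun k => hRA _ _) h1 h2
  constructor
  · intro n p Δi Θi hp hR h1
    obtain ⟨hmeq, hLC⟩ := key n p Δi Θi hp hR
    exact ⟨hmeq ▸ h1, hLC h1 (hmeq ▸ h1)⟩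
  · intro n p Δi Θi hp hR h2
    obtain ⟨hmeq, hLC⟩ := key n p Δi Θi hp hR
    exact ⟨hmeq ▸ h2, hLC (hmeq ▸ h2) h2⟩
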